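/- The η/SP-expansion relation →_E, the compatible closure of the axioms (η̄): M ▷ λx.(M x) for x ∉ FV(M) and (S̄P): M ▷ ⟨π₁M, π₂M⟩, is confluent. -/

import Mathlib

/-- Untyped lambda terms with pairing and projections, de Bruijn representation
(so terms are automatically identified up to alpha-equivalence). -/
inductive Tm : Type
  | var : Nat → Tm
  | app : Tm → Tm → Tm
  | lam : Tm → Tm
  | pair : Tm → Tm → Tm
  | p1 : Tm → Tm
  | p2 : Tm → Tm

/-- Shift free de Bruijn indices ≥ d up by one. -/
def Tm.lift (d : Nat) : Tm → Tm
  | .var n => if n < d then .var n else .var (n + 1)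
  | .app a b => .app (a.lift d) (b.lift d)
  | .lam a => .lam (a.lift (d + 1))
  | .pair a b => .pair (a.lift d) (b.lift d)
  | .p1 a => .p1 (a.lift d)
  | .p2 a => .p2 (a.lift d)

/-- Capture-avoiding substitution of s for variable k. -/
def Tm.subst : Tm → Nat → Tm → Tm
  | .var n, k, s => if n = k then s else if n < k then .var n else .var (n - 1)
  | .app a b, k, s => .app (a.subst k s) (b.subst k s)
  | .lam a, k, s => .lam (a.subst (k + 1) (s.lift 0))
  | .pair a b, k, s => .pair (a.subst k s) (b.subst k s)
  | .p1 a, k, s => .p1 (a.subst k s)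
  | .p2 a, k, s => .p2 (a.subst k s)

/-- One-step η/SP-expansion: compatible closure of (η̄) and (S̄P). -/
inductive StepE : Tm → Tm → Prop
  | eta {M} : StepE M (.lam (.app (M.lift 0) (.var 0)))
  | sp {M} : StepE M (.pair (.p1 M) (.p2 M))
  | lam {M M'} : StepE M M' → StepE (.lam M) (.lam M')
  | appL {M M' N} : StepE M M' → StepE (.app M N) (.app M' N)
  | appR {M N N'} : StepE N N' → StepE (.app M N) (.app M N')
  | pairL {M M' N} : StepE M M' → StepE (.pair M N) (.pair M' N)
  | pairR {M N N'} : StepE N N' → StepE (.pair M N) (.pair M N')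
  | p1 {M M'} : StepE M M' → StepE (.p1 M) (.p1 M')
  | p2 {M M'} : StepE M M' → StepE (.p2 M) (.p2 M')

theorem Tm.lift_lift (t : Tm) : ∀ i j, i ≤ j → (t.lift j).lift i = (t.lift i).lift (j + 1) := by
  induction t with
  | var n =>
    intro i j h
    simp only [Tm.lift]
    split_ifs <;> simp only [Tm.lift] <;> split_ifs <;>
      first | rfl | (exfalso; omega) | (congr 1; omega)
  | app a b iha ihb => intro i j h; simp only [Tm.lift, iha i j h, ihb i j h]
  | lam a iha => intro i j h; simp only [Tm.lift, iha (i + 1) (j + 1) (by omega)]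
  | pair a b iha ihb => intro i j h; simp only [Tm.lift, iha i j h, ihb i j h]
  | p1 a iha => intro i j h; simp only [Tm.lift, iha i j h]
  | p2 a iha => intro i j h; simp only [Tm.lift, iha i j h]

/-- Parallel η/SP-expansion. -/
inductive Par : Tm → Tm → Prop
  | var (n) : Par (.var n) (.var n)
  | eta {M} : Par M (.lam (.app (M.lift 0) (.var 0)))
  | sp {M} : Par M (.pair (.p1 M) (.p2 M))
  | app {a a' b b'} : Par a a' → Par b b' → Par (.app a b) (.app a' b')
  | lam {a a'} : Par a a' → Par (.lam a) (.lam a')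
  | pair {a a' b b'} : Par a a' → Par b b' → Par (.pair a b) (.pair a' b')
  | p1 {a a'} : Par a a' → Par (.p1 a) (.p1 a')
  | p2 {a a'} : Par a a' → Par (.p2 a) (.p2 a')

theorem Par.refl : ∀ t, Par t t := by
  intro t
  induction t with
  | var n => exact .var n
  | app _ _ ih1 ih2 => exact .app ih1 ih2
  | lam _ ih => exact .lam ih
  | pair _ _ ih1 ih2 => exact .pair ih1 ih2
  | p1 _ ih => exact .p1 ih
  | p2 _ ih => exact .p2 ih

theorem Par.lift {M N : Tm} (h : Par M N) : ∀ d, Par (M.lift d) (N.lift d) := by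
  induction h with
  | var n => intro d; simp only [Tm.lift]; split_ifs <;> exact Par.refl _
  | @eta M =>
    intro d
    simp only [Tm.lift]
    rw [if_pos (show (0:Nat) < d + 1 by omega)]
    rw [← Tm.lift_lift M 0 d (by omega)]
    exact Par.eta
  | sp => intro d; simp only [Tm.lift]; exact Par.sp
  | app _ _ ih1 ih2 => intro d; exact .app (ih1 d) (ih2 d)
  | lam _ ih => intro d; exact .lam (ih (d + 1))
  | pair _ _ ih1 ih2 => intro d; exact .pair (ih1 d) (ih2 d)
  | p1 _ ih => intro d; exact .p1 (ih d)
  | p2 _ ih => intro d; exact .p2 (ih d)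

theorem par_diamond : ∀ {a b c : Tm}, Par a b → Par a c → ∃ d, Par b d ∧ Par c d := by
  intro a b c h1
  induction h1 generalizing c with
  | var n => intro h2; exact ⟨c, h2, Par.refl c⟩
  | @eta M =>
    intro h2
    exact ⟨.lam (.app (c.lift 0) (.var 0)), .lam (.app (h2.lift 0) (.var 0)), .eta⟩
  | sp =>
    intro h2
    exact ⟨.pair (.p1 c) (.p2 c), .pair (.p1 h2) (.p2 h2), .sp⟩
  | @app a₁ b₁ a₂ b₂ h1l h1r ihl ihr =>
    intro h2
    cases h2 with
    | eta =>
      exact ⟨.lam (.app ((Tm.app b₁ b₂).lift 0) (.var 0)), .eta,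
        .lam (.app ((Par.app h1l h1r).lift 0) (.var 0))⟩
    | sp =>
      exact ⟨.pair (.p1 (.app b₁ b₂)) (.p2 (.app b₁ b₂)), .sp,
        .pair (.p1 (.app h1l h1r)) (.p2 (.app h1l h1r))⟩
    | app h2l h2r =>
      obtain ⟨d₁, hd₁, hd₁'⟩ := ihl h2l
      obtain ⟨d₂, hd₂, hd₂'⟩ := ihr h2r
      exact ⟨.app d₁ d₂, .app hd₁ hd₂, .app hd₁' hd₂'⟩
  | @lam a₁ b₁ h1' ih =>
    intro h2
    cases h2 with
    | eta =>
      exact ⟨.lam (.app ((Tm.lam b₁).lift 0) (.var 0)), .eta,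
        .lam (.app ((Par.lam h1').lift 0) (.var 0))⟩
    | sp =>
      exact ⟨.pair (.p1 (.lam b₁)) (.p2 (.lam b₁)), .sp,
        .pair (.p1 (.lam h1')) (.p2 (.lam h1'))⟩
    | lam h2' =>
      obtain ⟨d, hd, hd'⟩ := ih h2'
      exact ⟨.lam d, .lam hd, .lam hd'⟩
  | @pair a₁ b₁ a₂ b₂ h1l h1r ihl ihr =>
    intro h2
    cases h2 with
    | eta =>
      exact ⟨.lam (.app ((Tm.pair b₁ b₂).lift 0) (.var 0)), .eta,
        .lam (.app ((Par.pair h1l h1r).lift 0) (.var 0))⟩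
    | sp =>
      exact ⟨.pair (.p1 (.pair b₁ b₂)) (.p2 (.pair b₁ b₂)), .sp,
        .pair (.p1 (.pair h1l h1r)) (.p2 (.pair h1l h1r))⟩
    | pair h2l h2r =>
      obtain ⟨d₁, hd₁, hd₁'⟩ := ihl h2l
      obtain ⟨d₂, hd₂, hd₂'⟩ := ihr h2r
      exact ⟨.pair d₁ d₂, .pair hd₁ hd₂, .pair hd₁' hd₂'⟩
  | @p1 a₁ b₁ h1' ih =>
    intro h2
    cases h2 with
    | eta =>
      exact ⟨.lam (.app ((Tm.p1 b₁).lift 0) (.var 0)), .eta,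
        .lam (.app ((Par.p1 h1').lift 0) (.var 0))⟩
    | sp =>
      exact ⟨.pair (.p1 (.p1 b₁)) (.p2 (.p1 b₁)), .sp,
        .pair (.p1 (.p1 h1')) (.p2 (.p1 h1'))⟩
    | p1 h2' =>
      obtain ⟨d, hd, hd'⟩ := ih h2'
      exact ⟨.p1 d, .p1 hd, .p1 hd'⟩
  | @p2 a₁ b₁ h1' ih =>
    intro h2
    cases h2 with
    | eta =>
      exact ⟨.lam (.app ((Tm.p2 b₁).lift 0) (.var 0)), .eta,
        .lam (.app ((Par.p2 h1').lift 0) (.var 0))⟩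
    | sp =>
      exact ⟨.pair (.p1 (.p2 b₁)) (.p2 (.p2 b₁)), .sp,
        .pair (.p1 (.p2 h1')) (.p2 (.p2 h1'))⟩
    | p2 h2' =>
      obtain ⟨d, hd, hd'⟩ := ih h2'
      exact ⟨.p2 d, .p2 hd, .p2 hd'⟩

theorem par_strip {a b c : Tm} (h1 : Par a b) (h2 : Relation.ReflTransGen Par a c) :
    ∃ d, Relation.ReflTransGen Par b d ∧ Par c d := by
  induction h2 with
  | refl => exact ⟨b, .refl, h1⟩
  | tail _ hstep ih =>
    obtain ⟨d, hbd, hcd⟩ := ih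
    obtain ⟨e, hde, hce⟩ := par_diamond hcd hstep
    exact ⟨e, hbd.tail hde, hce⟩

theorem par_confluent {a b c : Tm} (h1 : Relation.ReflTransGen Par a b)
    (h2 : Relation.ReflTransGen Par a c) :
    ∃ d, Relation.ReflTransGen Par b d ∧ Relation.ReflTransGen Par c d := by
  induction h1 with
  | refl => exact ⟨c, h2, .refl⟩
  | tail _ hstep ih =>
    obtain ⟨d, hbd, hcd⟩ := ih
    obtain ⟨e, hbe, hde⟩ := par_strip hstep hbd
    exact ⟨e, hbe, hcd.tail hde⟩

theorem stepE_par {M N : Tm} (h : StepE M N) : Par M N := by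
  induction h with
  | eta => exact .eta
  | sp => exact .sp
  | lam _ ih => exact .lam ih
  | appL _ ih => exact .app ih (Par.refl _)
  | appR _ ih => exact .app (Par.refl _) ih
  | pairL _ ih => exact .pair ih (Par.refl _)
  | pairR _ ih => exact .pair (Par.refl _) ih
  | p1 _ ih => exact .p1 ih
  | p2 _ ih => exact .p2 ih

theorem par_stepE {M N : Tm} (h : Par M N) : Relation.ReflTransGen StepE M N := by
  induction h with
  | var => exact .refl
  | eta => exact .single .eta
  | sp => exact .single .sp
  | @app a a' b b' _ _ ih1 ih2 =>
    exact .trans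
      (Relation.ReflTransGen.lift (fun x => Tm.app x b) (fun _ _ h => StepE.appL h) _ _ ih1)
      (Relation.ReflTransGen.lift (fun x => Tm.app a' x) (fun _ _ h => StepE.appR h) _ _ ih2)
  | lam _ ih =>
    exact Relation.ReflTransGen.lift Tm.lam (fun _ _ h => StepE.lam h) _ _ ih
  | @pair a a' b b' _ _ ih1 ih2 =>
    exact .trans
      (Relation.ReflTransGen.lift (fun x => Tm.pair x b) (fun _ _ h => StepE.pairL h) _ _ ih1)
      (Relation.ReflTransGen.lift (fun x => Tm.pair a' x) (fun _ _ h => StepE.pairR h) _ _ ih2)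
  | p1 _ ih => exact Relation.ReflTransGen.lift Tm.p1 (fun _ _ h => StepE.p1 h) _ _ ih
  | p2 _ ih => exact Relation.ReflTransGen.lift Tm.p2 (fun _ _ h => StepE.p2 h) _ _ ih

theorem rtgPar_rtgStepE {M N : Tm} (h : Relation.ReflTransGen Par M N) :
    Relation.ReflTransGen StepE M N := by
  induction h with
  | refl => exact .refl
  | tail _ hstep ih => exact ih.trans (par_stepE hstep)

/-- The η/SP-expansion relation →_E is confluent. -/
theorem stepE_confluent (M N₁ N₂ : Tm)
    (h₁ : Relation.ReflTransGen StepE M N₁) (h₂ : Relation.ReflTransGen StepE M N₂) :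
    ∃ P, Relation.ReflTransGen StepE N₁ P ∧ Relation.ReflTransGen StepE N₂ P := by
  have h₁' : Relation.ReflTransGen Par M N₁ := Relation.ReflTransGen.mono (fun _ _ h => stepE_par h) _ _ h₁
  have h₂' : Relation.ReflTransGen Par M N₂ := Relation.ReflTransGen.mono (fun _ _ h => stepE_par h) _ _ h₂
  obtain ⟨P, hp₁, hp₂⟩ := par_confluent h₁' h₂'
  exact ⟨P, rtgPar_rtgStepE hp₁, rtgPar_rtgStepE hp₂⟩
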